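/- arXiv:2104.13825 — 4 statements merged into one kernel-verified Lean document; each statement's English description precedes it below -/
import Mathlib

section
/- Let Z be a real symmetric positive semidefinite matrix acting on ⊕_{m=1}^M V_m (each V_m a finite-dimensional real inner product space), with block decomposition Z = ((Z)_{i,j})_{i,j=1}^M. Suppose each diagonal block (Z)_{m,m} equals the identity on V_m, and that (Z)_{i,j} = 0 whenever i ≠ j and {i,j} is not an edge of a given graph G on the vertex set {1,…,M}. Then ‖Z − I‖ ≤ Δ(G), where Δ(G) is the maximum degree of G and ‖·‖ is the operator norm. -/
open Matrix

/-- Operator norm of a real matrix viewed as a map between Euclidean spaces. -/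
noncomputable def matOpNorm {m n : Type*} [Fintype m] [Fintype n] [DecidableEq n]
    (A : Matrix m n ℝ) : ℝ :=
  ‖LinearMap.toContinuousLinearMap (Matrix.toEuclideanLin A)‖

lemma euclid_inner_dot {n : Type*} [Fintype n] (u w : EuclideanSpace ℝ n) :
    (inner ℝ u w : ℝ) = dotProduct u w := by
  simp [PiLp.inner_apply, RCLike.inner_apply, dotProduct, mul_comm]

lemma matOpNorm_le_of_quadForm {n : Type*} [Fintype n] [DecidableEq n]
    (A : Matrix n n ℝ) (hA : A.IsHermitian) (c : ℝ) (hc : 0 ≤ c)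
    (h : ∀ v : n → ℝ, |v ⬝ᵥ (A *ᵥ v)| ≤ c * (v ⬝ᵥ v)) : matOpNorm A ≤ c := by
  set b := hA.eigenvectorBasis with hb
  set μ := hA.eigenvalues with hμ
  have hAt : Aᵀ = A := by
    rw [← conjTranspose_eq_transpose_of_trivial]; exact hA
  have hunit : ∀ i, dotProduct (b i) (b i) = (1 : ℝ) := by
    intro i
    have h1 : (inner ℝ (b i) (b i) : ℝ) = 1 := by
      rw [real_inner_self_eq_norm_sq, b.orthonormal.1 i]; norm_num
    rwa [euclid_inner_dot] at h1
  have hmv : ∀ i, A *ᵥ (b i : n → ℝ) = μ i • (b i : n → ℝ) := fun i =>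
    hA.mulVec_eigenvectorBasis i
  have hev : ∀ i, |μ i| ≤ c := by
    intro i
    have h2 := h (b i)
    rw [hmv i, dotProduct_smul, hunit i, smul_eq_mul, mul_one, mul_one] at h2
    exact h2
  rw [matOpNorm]
  refine ContinuousLinearMap.opNorm_le_bound _ hc (fun x => ?_)
  set T := LinearMap.toContinuousLinearMap (toEuclideanLin A) with hT
  have hrepr : ∀ i, b.repr (T x) i = μ i * b.repr x i := by
    intro i
    rw [b.repr_apply_apply, b.repr_apply_apply, euclid_inner_dot, euclid_inner_dot]
    have h1 : dotProduct (b i : n → ℝ) (T x : n → ℝ)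
        = dotProduct (b i : n → ℝ) (A *ᵥ (x : n → ℝ)) := rfl
    rw [h1, dotProduct_mulVec, ← hAt, vecMul_transpose, hmv i, smul_dotProduct,
      smul_eq_mul]
  have hnx : ‖T x‖ = ‖b.repr (T x)‖ := (b.repr.norm_map _).symm
  have hx : ‖x‖ = ‖b.repr x‖ := (b.repr.norm_map _).symm
  rw [hnx, hx, EuclideanSpace.norm_eq, EuclideanSpace.norm_eq]
  rw [show c = Real.sqrt (c ^ 2) by rw [Real.sqrt_sq hc], ← Real.sqrt_mul (sq_nonneg c)]
  apply Real.sqrt_le_sqrt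
  rw [Finset.mul_sum]
  refine Finset.sum_le_sum fun i _ => ?_
  rw [hrepr i]
  have h3 := hev i
  have h4 : |b.repr x i| ^ 2 = ‖b.repr x i‖ ^ 2 := by rw [Real.norm_eq_abs]
  simp only [Real.norm_eq_abs]
  rw [abs_mul, mul_pow]
  exact mul_le_mul_of_nonneg_right (pow_le_pow_left₀ (abs_nonneg _) h3 2) (sq_nonneg _)


/-- a PSD block matrix with identity diagonal blocks, whose
off-diagonal blocks are supported on the edges of a graph `G`, satisfies
`‖Z − I‖ ≤ Δ(G)`. -/
theorem norm_sub_one_le_maxDegree {M : ℕ} (dims : Fin M → ℕ)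
    (Z : Matrix ((i : Fin M) × Fin (dims i)) ((i : Fin M) × Fin (dims i)) ℝ)
    (hpsd : Z.PosSemidef)
    (G : SimpleGraph (Fin M)) [DecidableRel G.Adj]
    (hdiag : ∀ (m : Fin M) (a b : Fin (dims m)),
      Z ⟨m, a⟩ ⟨m, b⟩ = if a = b then 1 else 0)
    (hsupp : ∀ (i j : Fin M) (a : Fin (dims i)) (b : Fin (dims j)),
      i ≠ j → ¬ G.Adj i j → Z ⟨i, a⟩ ⟨j, b⟩ = 0) :
    matOpNorm (Z - 1) ≤ G.maxDegree := by
  classical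
  have hherm : (Z - 1).IsHermitian := hpsd.1.sub isHermitian_one
  refine matOpNorm_le_of_quadForm _ hherm _ (by positivity) ?_
  intro x
  set N : Fin M → ℝ := fun i => ∑ a, (x ⟨i, a⟩)^2 with hN
  set S : Fin M → Fin M → ℝ :=
    fun i j => ∑ a, ∑ b, x ⟨i, a⟩ * Z ⟨i, a⟩ ⟨j, b⟩ * x ⟨j, b⟩ with hSdef
  -- expansion of quadratic forms over the sigma type
  have expand : ∀ (v : ((k : Fin M) × Fin (dims k)) → ℝ)
      (B : Matrix ((k : Fin M) × Fin (dims k)) ((k : Fin M) × Fin (dims k)) ℝ),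
      v ⬝ᵥ (B *ᵥ v) = ∑ k, ∑ l, ∑ a, ∑ b, v ⟨k, a⟩ * B ⟨k, a⟩ ⟨l, b⟩ * v ⟨l, b⟩ := by
    intro v B
    have h1 : v ⬝ᵥ (B *ᵥ v)
        = ∑ p : (k : Fin M) × Fin (dims k), ∑ q : (k : Fin M) × Fin (dims k),
            v p * B p q * v q := by
      simp only [dotProduct, mulVec, Finset.mul_sum, mul_assoc]
    rw [h1, ← Finset.univ_sigma_univ, Finset.sum_sigma]
    refine Finset.sum_congr rfl fun k _ => ?_
    rw [Finset.sum_comm, Finset.sum_sigma]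
    refine Finset.sum_congr rfl fun l _ => ?_
    rw [Finset.sum_comm]
  -- symmetry of S
  have hsym : ∀ i j, S j i = S i j := by
    intro i j
    simp only [hSdef]
    rw [Finset.sum_comm]
    refine Finset.sum_congr rfl fun a _ => Finset.sum_congr rfl fun b _ => ?_
    have hz : Z ⟨j, b⟩ ⟨i, a⟩ = Z ⟨i, a⟩ ⟨j, b⟩ := by
      have := hpsd.1.apply (⟨i, a⟩ : (k : Fin M) × Fin (dims k)) ⟨j, b⟩
      rwa [star_trivial] at this
    rw [hz]; ring
  -- nonnegativity of N
  have hNnonneg : ∀ i, 0 ≤ N i := fun i => Finset.sum_nonneg fun a _ => sq_nonneg _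
  -- the key pairwise bound
  have key : ∀ i j, i ≠ j → ∀ ε : ℝ, ε = 1 ∨ ε = -1 →
      0 ≤ N i + N j + 2 * ε * S i j := by
    intro i j hij ε hε
    set w : ((k : Fin M) × Fin (dims k)) → ℝ :=
      fun p => if p.1 = i then x p else if p.1 = j then ε * x p else 0 with hw
    have h0 : (0:ℝ) ≤ w ⬝ᵥ (Z *ᵥ w) := by
      have := hpsd.dotProduct_mulVec_nonneg w
      rwa [star_trivial] at this
    rw [expand w Z] at h0
    -- the inner double sum vanishes unless k, l ∈ {i, j}
    have hF : ∀ k l, (k ≠ i ∧ k ≠ j) ∨ (l ≠ i ∧ l ≠ j) →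
        (∑ a, ∑ b, w ⟨k, a⟩ * Z ⟨k, a⟩ ⟨l, b⟩ * w ⟨l, b⟩) = 0 := by
      intro k l hkl
      refine Finset.sum_eq_zero fun a _ => Finset.sum_eq_zero fun b _ => ?_
      rcases hkl with ⟨h1, h2⟩ | ⟨h1, h2⟩
      · have : w ⟨k, a⟩ = 0 := by rw [hw]; simp [h1, h2]
        rw [this]; ring
      · have : w ⟨l, b⟩ = 0 := by rw [hw]; simp [h1, h2]
        rw [this]; ring
    have step2 : ∀ k : Fin M,
        (∑ l, ∑ a, ∑ b, w ⟨k, a⟩ * Z ⟨k, a⟩ ⟨l, b⟩ * w ⟨l, b⟩)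
          = ∑ l ∈ ({i, j} : Finset (Fin M)), ∑ a, ∑ b,
              w ⟨k, a⟩ * Z ⟨k, a⟩ ⟨l, b⟩ * w ⟨l, b⟩ := by
      intro k
      refine (Finset.sum_subset (Finset.subset_univ _) (fun l _ hl => ?_)).symm
      refine hF k l (Or.inr ?_)
      simpa [not_or] using hl
    simp_rw [step2] at h0
    have step1 : (∑ k, ∑ l ∈ ({i, j} : Finset (Fin M)), ∑ a, ∑ b,
          w ⟨k, a⟩ * Z ⟨k, a⟩ ⟨l, b⟩ * w ⟨l, b⟩)
        = ∑ k ∈ ({i, j} : Finset (Fin M)), ∑ l ∈ ({i, j} : Finset (Fin M)), ∑ a, ∑ b,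
            w ⟨k, a⟩ * Z ⟨k, a⟩ ⟨l, b⟩ * w ⟨l, b⟩ := by
      refine (Finset.sum_subset (Finset.subset_univ _) (fun k _ hk => ?_)).symm
      have hk' : k ≠ i ∧ k ≠ j := by simpa [not_or] using hk
      exact Finset.sum_eq_zero fun l _ => hF k l (Or.inl hk')
    rw [step1, Finset.sum_pair hij] at h0
    rw [Finset.sum_pair hij, Finset.sum_pair hij] at h0
    -- evaluate the four blocks
    have hwa : ∀ a : Fin (dims i), w ⟨i, a⟩ = x ⟨i, a⟩ := fun a => if_pos rfl
    have hwb : ∀ b : Fin (dims j), w ⟨j, b⟩ = ε * x ⟨j, b⟩ := by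
      intro b
      rw [hw]
      simp [hij.symm]
    have hε2 : ε * ε = 1 := by rcases hε with h | h <;> rw [h] <;> ring
    have hFii : (∑ a, ∑ b, w ⟨i, a⟩ * Z ⟨i, a⟩ ⟨i, b⟩ * w ⟨i, b⟩) = N i := by
      simp only [hwa, hdiag, hN]
      refine Finset.sum_congr rfl fun a _ => ?_
      rw [Finset.sum_eq_single a]
      · simp [sq]
      · intro b _ hb; simp [Ne.symm hb]
      · intro hcon; exact absurd (Finset.mem_univ a) hcon
    have hFjj : (∑ a, ∑ b, w ⟨j, a⟩ * Z ⟨j, a⟩ ⟨j, b⟩ * w ⟨j, b⟩) = N j := by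
      simp only [hwb, hdiag, hN]
      refine Finset.sum_congr rfl fun a _ => ?_
      rw [Finset.sum_eq_single a]
      · rw [if_pos rfl]
        linear_combination (x ⟨j, a⟩)^2 * hε2
      · intro b _ hb; simp [Ne.symm hb]
      · intro hcon; exact absurd (Finset.mem_univ a) hcon
    have hFij : (∑ a, ∑ b, w ⟨i, a⟩ * Z ⟨i, a⟩ ⟨j, b⟩ * w ⟨j, b⟩) = ε * S i j := by
      simp only [hwa, hwb, hSdef, Finset.mul_sum]
      refine Finset.sum_congr rfl fun a _ => Finset.sum_congr rfl fun b _ => by ring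
    have hFji : (∑ a, ∑ b, w ⟨j, a⟩ * Z ⟨j, a⟩ ⟨i, b⟩ * w ⟨i, b⟩) = ε * S i j := by
      rw [← hsym i j]
      simp only [hwa, hwb, hSdef, Finset.mul_sum]
      refine Finset.sum_congr rfl fun a _ => Finset.sum_congr rfl fun b _ => by ring
    rw [hFii, hFjj, hFij, hFji] at h0
    linarith
  -- pairwise absolute bound
  have hpair : ∀ i j, i ≠ j → |S i j| ≤ (N i + N j) / 2 := by
    intro i j hij
    have k1 := key i j hij 1 (Or.inl rfl)
    have k2 := key i j hij (-1) (Or.inr rfl)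
    rw [abs_le]; constructor <;> linarith
  -- the quadratic form as a sum over adjacent pairs
  have hmain : x ⬝ᵥ ((Z - 1) *ᵥ x)
      = ∑ k, ∑ l, (if G.Adj k l then S k l else 0) := by
    rw [expand x (Z - 1)]
    refine Finset.sum_congr rfl fun k _ => Finset.sum_congr rfl fun l _ => ?_
    by_cases hkl : k = l
    · subst hkl
      rw [if_neg (G.irrefl)]
      refine Finset.sum_eq_zero fun a _ => Finset.sum_eq_zero fun b _ => ?_
      have h1 : (Z - 1) ⟨k, a⟩ ⟨k, b⟩ = 0 := by
        rw [Matrix.sub_apply, hdiag, Matrix.one_apply]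
        by_cases hab : a = b
        · subst hab; simp
        · rw [if_neg hab, if_neg (by simp [hab])]; ring
      rw [h1]; ring
    · by_cases hadj : G.Adj k l
      · rw [if_pos hadj]
        simp only [hSdef]
        refine Finset.sum_congr rfl fun a _ => Finset.sum_congr rfl fun b _ => ?_
        have h1 : (Z - 1) ⟨k, a⟩ ⟨l, b⟩ = Z ⟨k, a⟩ ⟨l, b⟩ := by
          rw [Matrix.sub_apply, Matrix.one_apply_ne, sub_zero]
          exact fun hcon => hkl (congrArg Sigma.fst hcon)
        rw [h1]
      · rw [if_neg hadj]
        refine Finset.sum_eq_zero fun a _ => Finset.sum_eq_zero fun b _ => ?_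
        have h1 : (Z - 1) ⟨k, a⟩ ⟨l, b⟩ = 0 := by
          rw [Matrix.sub_apply, hsupp k l a b hkl hadj, Matrix.one_apply_ne, sub_zero]
          exact fun hcon => hkl (congrArg Sigma.fst hcon)
        rw [h1]; ring
  have hxx : x ⬝ᵥ x = ∑ k, N k := by
    rw [dotProduct, ← Finset.univ_sigma_univ, Finset.sum_sigma]
    exact Finset.sum_congr rfl fun k _ => Finset.sum_congr rfl fun a _ => (sq _).symm
  -- put everything together
  calc |x ⬝ᵥ ((Z - 1) *ᵥ x)|
      = |∑ k, ∑ l, (if G.Adj k l then S k l else 0)| := by rw [hmain]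
    _ ≤ ∑ k, ∑ l, |if G.Adj k l then S k l else 0| :=
        (Finset.abs_sum_le_sum_abs _ _).trans
          (Finset.sum_le_sum fun k _ => Finset.abs_sum_le_sum_abs _ _)
    _ ≤ ∑ k, ∑ l, (if G.Adj k l then (N k + N l) / 2 else 0) := by
        refine Finset.sum_le_sum fun k _ => Finset.sum_le_sum fun l _ => ?_
        by_cases hadj : G.Adj k l
        · rw [if_pos hadj, if_pos hadj]; exact hpair k l hadj.ne
        · rw [if_neg hadj, if_neg hadj]; simp
    _ = ∑ k, ∑ l, (if G.Adj k l then N k else 0) := by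
        have swap : (∑ k, ∑ l, (if G.Adj k l then N l else 0))
            = ∑ k, ∑ l, (if G.Adj k l then N k else 0) := by
          rw [Finset.sum_comm]
          refine Finset.sum_congr rfl fun k _ => Finset.sum_congr rfl fun l _ => ?_
          by_cases h : G.Adj k l
          · rw [if_pos h, if_pos h.symm]
          · rw [if_neg h, if_neg fun hc => h hc.symm]
        have expand2 : (∑ k, ∑ l, (if G.Adj k l then (N k + N l) / 2 else 0))
            = ((∑ k, ∑ l, (if G.Adj k l then N k else 0))
              + ∑ k, ∑ l, (if G.Adj k l then N l else 0)) / 2 := by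
          rw [← Finset.sum_add_distrib]
          rw [Finset.sum_div]
          refine Finset.sum_congr rfl fun k _ => ?_
          rw [← Finset.sum_add_distrib, Finset.sum_div]
          refine Finset.sum_congr rfl fun l _ => ?_
          by_cases hadj : G.Adj k l
          · rw [if_pos hadj, if_pos hadj, if_pos hadj]
          · rw [if_neg hadj, if_neg hadj, if_neg hadj]; ring
        rw [expand2, swap]; ring
    _ = ∑ k, (G.degree k : ℝ) * N k := by
        refine Finset.sum_congr rfl fun k _ => ?_
        rw [← Finset.sum_filter, Finset.sum_const, nsmul_eq_mul]
        congr 1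
        rw [SimpleGraph.degree, SimpleGraph.neighborFinset_eq_filter]
    _ ≤ ∑ k, (G.maxDegree : ℝ) * N k := by
        refine Finset.sum_le_sum fun k _ => ?_
        refine mul_le_mul_of_nonneg_right ?_ (hNnonneg k)
        exact_mod_cast G.degree_le_maxDegree k
    _ = (G.maxDegree : ℝ) * (x ⬝ᵥ x) := by rw [← Finset.mul_sum, hxx]
end

section
/- Let h be a real symmetric positive definite matrix on ℓ²(Λ), and let Λ = Λ₁ ∪ ⋯ ∪ Λ_M be a partition with h_{Λ_m} the restriction (compression) of h to ℓ²(Λ_m), each assumed positive definite. Suppose the off-diagonal blocks ι_{Λ_i}* h ι_{Λ_j} vanish whenever the graph distance d_Λ(Λ_i, Λ_j) ≠ 1, and let G_M be the dual graph with vertices {Λ_m} and edges between subregions at distance 1. Let D⁻_β = ⊕_{m=1}^M h_{Λ_m}^{-1/2} tanh(β_m h_{Λ_m}^{1/2}) for any β = (β_1,…,β_M) with β_m ∈ (0, ∞]. Then ‖D⁻_β h^{1/2}‖ ≤ √(Δ(G_M) + 1), where Δ(G_M) is the maximum degree of G_M. -/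
open Matrix
open scoped ENNReal

/-- 1-norm distance on `ℤ^d`. -/
def dist1 {d : ℕ} (x y : Fin d → ℤ) : ℤ := ∑ i, |x i - y i|

/-- The compression of `h` to the subregion `part⁻¹(m)`. -/
def blockMat {d M : ℕ} (Λ : Finset (Fin d → ℤ)) (part : Λ → Fin M)
    (h : Matrix Λ Λ ℝ) (m : Fin M) :
    Matrix {x : Λ // part x = m} {x : Λ // part x = m} ℝ :=
  fun a b => h a.1 b.1

/-- `tanh(β·λ)`, with the convention `tanh(∞·λ) = 1` (for `λ > 0`). -/
noncomputable def tanhE (β : ℝ≥0∞) (lam : ℝ) : ℝ :=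
  if β = ⊤ then 1 else Real.tanh (β.toReal * lam)

/-- The block-diagonal operator `D⁻_β = ⊕_m h_{Λ_m}^{-1/2} tanh(β_m h_{Λ_m}^{1/2})`,
each block being defined by the spectral functional calculus. -/
noncomputable def Dneg {d M : ℕ} (Λ : Finset (Fin d → ℤ)) (part : Λ → Fin M)
    (h : Matrix Λ Λ ℝ) (β : Fin M → ℝ≥0∞)
    (hb : ∀ m, (blockMat Λ part h m).PosDef) : Matrix Λ Λ ℝ :=
  fun x y =>
    if hxy : part x = part y then
      ((hb (part x)).1.cfc fun μ =>
        (Real.sqrt μ)⁻¹ * tanhE (β (part x)) (Real.sqrt μ)) ⟨x, rfl⟩ ⟨y, hxy.symm⟩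
    else 0

/-! ### Auxiliary lemmas -/

set_option linter.unusedSectionVars false

section Aux

lemma tanhE_sq_le_one (β : ℝ≥0∞) (x : ℝ) : tanhE β x ^ 2 ≤ 1 := by
  unfold tanhE
  split
  · norm_num
  · rw [Real.tanh_eq_sinh_div_cosh, div_pow, div_le_one (by positivity)]
    nlinarith [Real.cosh_sq (β.toReal * x), Real.cosh_pos (β.toReal * x)]

lemma sum_fiber_eq {α β M : Type*} [Fintype α] [Fintype β] [DecidableEq β] [AddCommMonoid M]
    (f : α → β) (g : α → M) (b : β) (hg : ∀ a, f a ≠ b → g a = 0) :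
    ∑ a, g a = ∑ a : {a // f a = b}, g a.1 := by
  rw [← Fintype.sum_fiberwise f g]
  exact Finset.sum_eq_single b
    (fun b' _ hb' => Finset.sum_eq_zero fun a _ => hg a.1 (a.2.trans_ne hb'))
    (by simp)

lemma diag_mulVec {n : Type*} [Fintype n] [DecidableEq n] (d : n → ℝ) (v : n → ℝ) :
    diagonal d *ᵥ v = fun i => d i * v i := by
  ext i; simp [mulVec, diagonal_dotProduct]

lemma sum_dot {ι n : Type*} [Fintype n] (s : Finset ι) (f : ι → n → ℝ) (v : n → ℝ) :
    (∑ m ∈ s, f m) ⬝ᵥ v = ∑ m ∈ s, f m ⬝ᵥ v := by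
  simp only [dotProduct, Finset.sum_apply, Finset.sum_mul]
  exact Finset.sum_comm

lemma dot_sum {ι n : Type*} [Fintype n] (s : Finset ι) (v : n → ℝ) (f : ι → n → ℝ) :
    v ⬝ᵥ (∑ m ∈ s, f m) = ∑ m ∈ s, v ⬝ᵥ f m := by
  simp only [dotProduct, Finset.sum_apply, Finset.mul_sum]
  exact Finset.sum_comm

lemma mulVec_sum {ι n : Type*} [Fintype n] (s : Finset ι) (A : Matrix n n ℝ) (f : ι → n → ℝ) :
    A *ᵥ (∑ m ∈ s, f m) = ∑ m ∈ s, A *ᵥ f m :=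
  map_sum A.mulVecLin f s

end Aux

section cfcFacts
variable {n : Type*} [Fintype n] [DecidableEq n] {A : Matrix n n ℝ} (hA : A.IsHermitian)

lemma mulVec_dot (M : Matrix n n ℝ) (a b : n → ℝ) :
    (M *ᵥ a) ⬝ᵥ b = a ⬝ᵥ (Mᵀ *ᵥ b) := by
  rw [dotProduct_mulVec, vecMul_transpose, dotProduct_comm]

lemma star_mulU (v : n → ℝ) :
    (star hA.eigenvectorUnitary.1 : Matrix n n ℝ) *ᵥ (hA.eigenvectorUnitary.1 *ᵥ v) = v := by
  rw [mulVec_mulVec, Unitary.star_mul_self_of_mem (SetLike.coe_mem _), one_mulVec]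

lemma mulU_star (v : n → ℝ) :
    hA.eigenvectorUnitary.1 *ᵥ ((star hA.eigenvectorUnitary.1 : Matrix n n ℝ) *ᵥ v) = v := by
  rw [mulVec_mulVec, Unitary.mul_star_self_of_mem (SetLike.coe_mem _), one_mulVec]

lemma cfc_mulVec (f : ℝ → ℝ) (v : n → ℝ) :
    hA.cfc f *ᵥ (hA.eigenvectorUnitary.1 *ᵥ v)
      = hA.eigenvectorUnitary.1 *ᵥ (fun i => f (hA.eigenvalues i) * v i) := by
  rw [Matrix.IsHermitian.cfc, Unitary.conjStarAlgAut_apply, ← mulVec_mulVec, ← mulVec_mulVec, star_mulU, diag_mulVec]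
  rfl

lemma A_mulVecU (v : n → ℝ) :
    A *ᵥ (hA.eigenvectorUnitary.1 *ᵥ v)
      = hA.eigenvectorUnitary.1 *ᵥ (fun i => hA.eigenvalues i * v i) := by
  have h1 : A *ᵥ (hA.eigenvectorUnitary.1 *ᵥ v)
      = (hA.eigenvectorUnitary.1 * diagonal (RCLike.ofReal ∘ hA.eigenvalues)
          * (star hA.eigenvectorUnitary.1 : Matrix n n ℝ)) *ᵥ (hA.eigenvectorUnitary.1 *ᵥ v) := by
    exact congrArg (fun M => M *ᵥ (hA.eigenvectorUnitary.1 *ᵥ v)) hA.spectral_theorem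
  rw [h1, ← mulVec_mulVec, ← mulVec_mulVec, star_mulU, diag_mulVec]
  rfl

lemma dotU (v w : n → ℝ) :
    (hA.eigenvectorUnitary.1 *ᵥ v) ⬝ᵥ (hA.eigenvectorUnitary.1 *ᵥ w) = v ⬝ᵥ w := by
  rw [mulVec_dot, mulVec_mulVec]
  have h2 : (hA.eigenvectorUnitary.1)ᵀ * hA.eigenvectorUnitary.1 = 1 := by
    have := Unitary.star_mul_self_of_mem (SetLike.coe_mem hA.eigenvectorUnitary)
    simpa [star_eq_conjTranspose, conjTranspose_eq_transpose_of_trivial] using this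
  rw [h2, one_mulVec]

/-- coordinates of `y` in the eigenbasis -/
noncomputable def coords (y : n → ℝ) : n → ℝ :=
  (star hA.eigenvectorUnitary.1 : Matrix n n ℝ) *ᵥ y

lemma U_coords (y : n → ℝ) : hA.eigenvectorUnitary.1 *ᵥ coords hA y = y := mulU_star hA y

lemma cfc_dot_self (f : ℝ → ℝ) (y : n → ℝ) :
    (hA.cfc f *ᵥ y) ⬝ᵥ y = ∑ i, f (hA.eigenvalues i) * (coords hA y i) ^ 2 := by
  conv_lhs => rw [← U_coords hA y]
  rw [cfc_mulVec, dotU]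
  simp [dotProduct, sq, mul_comm, mul_assoc]

lemma cfc_normSq (f : ℝ → ℝ) (y : n → ℝ) :
    (hA.cfc f *ᵥ y) ⬝ᵥ (hA.cfc f *ᵥ y)
      = ∑ i, f (hA.eigenvalues i) ^ 2 * (coords hA y i) ^ 2 := by
  conv_lhs => rw [← U_coords hA y]
  rw [cfc_mulVec, dotU]
  simp only [dotProduct]
  exact Finset.sum_congr rfl fun i _ => by ring

lemma cfc_quadA (f : ℝ → ℝ) (y : n → ℝ) :
    (hA.cfc f *ᵥ y) ⬝ᵥ (A *ᵥ (hA.cfc f *ᵥ y))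
      = ∑ i, f (hA.eigenvalues i) ^ 2 * hA.eigenvalues i * (coords hA y i) ^ 2 := by
  conv_lhs => rw [← U_coords hA y]
  rw [cfc_mulVec, A_mulVecU, dotU]
  simp only [dotProduct]
  exact Finset.sum_congr rfl fun i _ => by ring

lemma cfc_isSymm (f : ℝ → ℝ) : (hA.cfc f)ᵀ = hA.cfc f := by
  simp only [Matrix.IsHermitian.cfc, Unitary.conjStarAlgAut_apply, transpose_mul, diagonal_transpose,
    star_eq_conjTranspose, conjTranspose_eq_transpose_of_trivial, transpose_transpose,
    mul_assoc]

end cfcFacts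

section Blocks

variable {d M : ℕ} (Λ : Finset (Fin d → ℤ)) (part : Λ → Fin M)

/-- restriction of a vector to a fiber -/
def res (u : Λ → ℝ) (m : Fin M) : {x : Λ // part x = m} → ℝ := fun a => u a.1

/-- extension of a vector on a fiber by zero -/
def emb (m : Fin M) (v : {x : Λ // part x = m} → ℝ) : Λ → ℝ :=
  fun x => if hx : part x = m then v ⟨x, hx⟩ else 0

lemma dep_eval (v : ∀ m : Fin M, ({x : Λ // part x = m} → ℝ)) (m : Fin M)
    (a : {x : Λ // part x = m}) : v (part a.1) ⟨a.1, rfl⟩ = v m a := by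
  obtain ⟨z, hz⟩ := a
  subst hz
  rfl

lemma emb_dot (m : Fin M) (v : {x : Λ // part x = m} → ℝ) (u : Λ → ℝ) :
    emb Λ part m v ⬝ᵥ u = v ⬝ᵥ res Λ part u m := by
  rw [dotProduct, sum_fiber_eq part _ m (fun a ha => by simp [emb, dif_neg ha])]
  exact Finset.sum_congr rfl fun a _ => by simp [emb, res, dif_pos a.2]

lemma mulVec_emb (h : Matrix Λ Λ ℝ) (m' : Fin M) (v' : {x : Λ // part x = m'} → ℝ)
    (x : Λ) : (h *ᵥ emb Λ part m' v') x = ∑ b : {z : Λ // part z = m'}, h x b.1 * v' b := by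
  rw [mulVec, dotProduct, sum_fiber_eq part _ m' (fun a ha => by simp [emb, dif_neg ha])]
  exact Finset.sum_congr rfl fun b _ => by simp [emb, dif_pos b.2]

lemma emb_dot_mulVec_emb (h : Matrix Λ Λ ℝ) (m m' : Fin M)
    (v : {x : Λ // part x = m} → ℝ) (v' : {x : Λ // part x = m'} → ℝ) :
    emb Λ part m v ⬝ᵥ (h *ᵥ emb Λ part m' v')
      = ∑ a : {z : Λ // part z = m}, ∑ b : {z : Λ // part z = m'}, v a * (h a.1 b.1 * v' b) := by
  rw [emb_dot]
  unfold res dotProduct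
  refine Finset.sum_congr rfl fun a _ => ?_
  rw [show (fun a : {x : Λ // part x = m} => (h *ᵥ emb Λ part m' v') a.1) a
      = (h *ᵥ emb Λ part m' v') a.1 from rfl, mulVec_emb, Finset.mul_sum]

lemma emb_dot_mulVec_emb_same (h : Matrix Λ Λ ℝ) (m : Fin M)
    (v v' : {x : Λ // part x = m} → ℝ) :
    emb Λ part m v ⬝ᵥ (h *ᵥ emb Λ part m v')
      = v ⬝ᵥ (blockMat Λ part h m *ᵥ v') := by
  rw [emb_dot_mulVec_emb]
  simp only [dotProduct, mulVec, blockMat, Finset.mul_sum]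

/-- the function applied to each block -/
noncomputable def gfun (β : ℝ≥0∞) (μ : ℝ) : ℝ := (Real.sqrt μ)⁻¹ * tanhE β (Real.sqrt μ)

lemma Dneg_mulVec_apply (h : Matrix Λ Λ ℝ) (β : Fin M → ℝ≥0∞)
    (hb : ∀ m, (blockMat Λ part h m).PosDef) (u : Λ → ℝ) (x : Λ) :
    (Dneg Λ part h β hb *ᵥ u) x
      = (((hb (part x)).1.cfc (gfun (β (part x)))) *ᵥ res Λ part u (part x)) ⟨x, rfl⟩ := by
  rw [mulVec, dotProduct,
    sum_fiber_eq part _ (part x) (fun a ha => by simp [Dneg, dif_neg (Ne.symm ha)])]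
  rw [mulVec, dotProduct]
  refine Finset.sum_congr rfl fun a _ => ?_
  have ha : part x = part a.1 := a.2.symm
  simp only [Dneg, dif_pos ha]
  congr 1

end Blocks

/-- `‖D⁻_β h^{1/2}‖ ≤ √(Δ(G_M) + 1)` where `G_M` is the dual graph
of the decomposition. -/
theorem Dneg_mul_sqrt_opNorm_bound {d M : ℕ} (Λ : Finset (Fin d → ℤ))
    (part : Λ → Fin M) (hsurj : Function.Surjective part)
    (h : Matrix Λ Λ ℝ) (hPD : h.PosDef)
    (hb : ∀ m, (blockMat Λ part h m).PosDef)
    (G : SimpleGraph (Fin M)) [DecidableRel G.Adj]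
    (hG : ∀ i j, G.Adj i j ↔ i ≠ j ∧ ∃ x y : Λ, part x = i ∧ part y = j ∧
      dist1 (x : Fin d → ℤ) (y : Fin d → ℤ) = 1)
    (hcompat : ∀ x y : Λ, part x ≠ part y → ¬ G.Adj (part x) (part y) → h x y = 0)
    (β : Fin M → ℝ≥0∞) (hβ : ∀ m, 0 < β m) :
    matOpNorm (Dneg Λ part h β hb * hPD.1.cfc Real.sqrt) ≤
      Real.sqrt (G.maxDegree + 1) := by
  classical
  set Q : Matrix Λ Λ ℝ := hPD.1.cfc Real.sqrt with hQdef
  have hQsymm : Qᵀ = Q := cfc_isSymm hPD.1 Real.sqrt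
  have hQQ : Q * Q = h := by
    rw [hQdef, Matrix.IsHermitian.cfc, ← map_mul, diagonal_mul_diagonal]
    conv_rhs => rw [hPD.1.spectral_theorem]
    congr 2
    funext i
    simp [Real.mul_self_sqrt (hPD.eigenvalues_pos i).le]
  have hQdot : ∀ u v : Λ → ℝ, (Q *ᵥ u) ⬝ᵥ (Q *ᵥ v) = u ⬝ᵥ (h *ᵥ v) := by
    intro u v
    rw [mulVec_dot, hQsymm, mulVec_mulVec, hQQ]
  set Δ : ℝ := (G.maxDegree : ℝ) with hΔdef
  have hΔ0 : 0 ≤ Δ := Nat.cast_nonneg _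
  -- the core quadratic-form estimate
  have key : ∀ x : Λ → ℝ,
      ((Dneg Λ part h β hb * Q) *ᵥ x) ⬝ᵥ ((Dneg Λ part h β hb * Q) *ᵥ x)
        ≤ (Δ + 1) * (x ⬝ᵥ x) := by
    intro x
    set y : Λ → ℝ := Q *ᵥ x with hydef
    have hAx : (Dneg Λ part h β hb * Q) *ᵥ x = Dneg Λ part h β hb *ᵥ y := by
      rw [← mulVec_mulVec]
    rw [hAx]
    set ym : ∀ m : Fin M, ({z : Λ // part z = m} → ℝ) := fun m => res Λ part y m with hymdef
    set S : Fin M → ℝ := fun m =>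
      ∑ i, ((hb m).1.eigenvalues i)⁻¹ * (coords (hb m).1 (ym m) i) ^ 2 with hSdef
    have hS0 : ∀ m, 0 ≤ S m := by
      intro m
      refine Finset.sum_nonneg fun i _ => mul_nonneg (inv_nonneg.2 ?_) (sq_nonneg _)
      exact ((hb m).eigenvalues_pos i).le
    set wv : ∀ m : Fin M, ({z : Λ // part z = m} → ℝ) := fun m =>
      (hb m).1.cfc (fun μ => μ⁻¹) *ᵥ ym m with hwvdef
    set W : Λ → ℝ := ∑ m, emb Λ part m (wv m) with hWdef
    set T : Fin M → Fin M → ℝ := fun m m' =>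
      emb Λ part m (wv m) ⬝ᵥ (h *ᵥ emb Λ part m' (wv m')) with hTdef
    -- step 1 : ‖Dneg y‖² ≤ ∑ S m
    have step1 : (Dneg Λ part h β hb *ᵥ y) ⬝ᵥ (Dneg Λ part h β hb *ᵥ y) ≤ ∑ m, S m := by
      rw [dotProduct]
      rw [← Fintype.sum_fiberwise part
        (fun x' => (Dneg Λ part h β hb *ᵥ y) x' * (Dneg Λ part h β hb *ᵥ y) x')]
      refine Finset.sum_le_sum fun m _ => ?_
      have hrw : ∀ a : {z : Λ // part z = m},
          (Dneg Λ part h β hb *ᵥ y) a.1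
            = ((hb m).1.cfc (gfun (β m)) *ᵥ ym m) a := by
        intro a
        rw [Dneg_mulVec_apply]
        exact dep_eval Λ part (fun m => (hb m).1.cfc (gfun (β m)) *ᵥ res Λ part y m) m a
      calc ∑ a : {z : Λ // part z = m},
            (Dneg Λ part h β hb *ᵥ y) a.1 * (Dneg Λ part h β hb *ᵥ y) a.1
          = ((hb m).1.cfc (gfun (β m)) *ᵥ ym m) ⬝ᵥ ((hb m).1.cfc (gfun (β m)) *ᵥ ym m) := by
            rw [dotProduct]
            exact Finset.sum_congr rfl fun a _ => by rw [hrw a]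
        _ = ∑ i, gfun (β m) ((hb m).1.eigenvalues i) ^ 2 * (coords (hb m).1 (ym m) i) ^ 2 :=
            cfc_normSq (hb m).1 _ _
        _ ≤ S m := by
            refine Finset.sum_le_sum fun i _ => ?_
            refine mul_le_mul_of_nonneg_right ?_ (sq_nonneg _)
            have hpos := (hb m).eigenvalues_pos i
            set lam := (hb m).1.eigenvalues i
            have hsq : Real.sqrt lam ^ 2 = lam := Real.sq_sqrt hpos.le
            calc gfun (β m) lam ^ 2
                = ((Real.sqrt lam)⁻¹) ^ 2 * tanhE (β m) (Real.sqrt lam) ^ 2 := by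
                  rw [gfun, mul_pow]
              _ ≤ ((Real.sqrt lam)⁻¹) ^ 2 * 1 :=
                  mul_le_mul_of_nonneg_left (tanhE_sq_le_one _ _) (sq_nonneg _)
              _ = lam⁻¹ := by rw [mul_one, inv_pow, hsq]
    -- step 2 : ∑ S m = W ⬝ᵥ y
    have step2 : W ⬝ᵥ y = ∑ m, S m := by
      rw [hWdef, sum_dot]
      refine Finset.sum_congr rfl fun m _ => ?_
      rw [emb_dot]
      exact cfc_dot_self (hb m).1 _ (ym m)
    -- step 4 : quadratic form of h at W
    have step4 : (Q *ᵥ W) ⬝ᵥ (Q *ᵥ W) = ∑ m, ∑ m', T m m' := by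
      rw [hQdot, hWdef, _root_.mulVec_sum, sum_dot]
      exact Finset.sum_congr rfl fun m _ => dot_sum _ _ _
    -- diagonal terms
    have hTdiag : ∀ m, T m m = S m := by
      intro m
      rw [hTdef]
      simp only
      rw [emb_dot_mulVec_emb_same, hwvdef]
      simp only
      rw [cfc_quadA (hb m).1 _ (ym m)]
      refine Finset.sum_congr rfl fun i _ => ?_
      have hpos := (hb m).eigenvalues_pos i
      field_simp
    -- vanishing terms
    have hTzero : ∀ m m', m ≠ m' → ¬ G.Adj m m' → T m m' = 0 := by
      intro m m' hne hnadj
      rw [hTdef]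
      simp only
      rw [emb_dot_mulVec_emb]
      refine Finset.sum_eq_zero fun a _ => Finset.sum_eq_zero fun b _ => ?_
      have : h a.1 b.1 = 0 := by
        apply hcompat a.1 b.1
        · rw [a.2, b.2]; exact hne
        · rw [a.2, b.2]; exact hnadj
      rw [this, zero_mul, mul_zero]
    -- Cauchy-Schwarz for off-diagonal terms
    have hTCS : ∀ m m', (T m m') ^ 2 ≤ S m * S m' := by
      intro m m'
      have h1 : T m m' = (Q *ᵥ emb Λ part m (wv m)) ⬝ᵥ (Q *ᵥ emb Λ part m' (wv m')) :=
        (hQdot _ _).symm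
      have h2 : (Q *ᵥ emb Λ part m (wv m)) ⬝ᵥ (Q *ᵥ emb Λ part m (wv m)) = S m := by
        rw [hQdot]; exact hTdiag m
      have h3 : (Q *ᵥ emb Λ part m' (wv m')) ⬝ᵥ (Q *ᵥ emb Λ part m' (wv m')) = S m' := by
        rw [hQdot]; exact hTdiag m'
      rw [h1, ← h2, ← h3]
      simp only [dotProduct]
      calc (∑ i, (Q *ᵥ emb Λ part m (wv m)) i * (Q *ᵥ emb Λ part m' (wv m')) i) ^ 2
          ≤ (∑ i, ((Q *ᵥ emb Λ part m (wv m)) i) ^ 2)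
            * (∑ i, ((Q *ᵥ emb Λ part m' (wv m')) i) ^ 2) :=
            Finset.sum_mul_sq_le_sq_mul_sq _ _ _
        _ = _ := by simp [sq]
    have hTle : ∀ m m', m ≠ m' → T m m' ≤ (S m + S m') / 2 := by
      intro m m' _
      have hsq : (T m m') ^ 2 ≤ ((S m + S m') / 2) ^ 2 := by
        nlinarith [hTCS m m', sq_nonneg (S m - S m'), hS0 m, hS0 m']
      have := Real.sqrt_le_sqrt hsq
      rw [Real.sqrt_sq_eq_abs, Real.sqrt_sq_eq_abs] at this
      calc T m m' ≤ |T m m'| := le_abs_self _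
        _ ≤ |(S m + S m') / 2| := this
        _ = (S m + S m') / 2 := abs_of_nonneg (by linarith [hS0 m, hS0 m'])
    -- step 8 : degree bound
    have step8 : ∑ m, ∑ m', T m m' ≤ (Δ + 1) * ∑ m, S m := by
      have hB : ∀ m m', T m m' ≤ (if m = m' then S m else 0)
          + (if G.Adj m m' then (S m + S m') / 2 else 0) := by
        intro m m'
        by_cases heq : m = m'
        · subst heq
          rw [if_pos rfl, if_neg (G.irrefl), add_zero]
          exact (hTdiag m).le
        · rw [if_neg heq, zero_add]
          by_cases hadj : G.Adj m m'
          · rw [if_pos hadj]; exact hTle m m' heq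
          · rw [if_neg hadj, hTzero m m' heq hadj]
      calc ∑ m, ∑ m', T m m'
          ≤ ∑ m, ∑ m', ((if m = m' then S m else 0)
              + (if G.Adj m m' then (S m + S m') / 2 else 0)) :=
            Finset.sum_le_sum fun m _ => Finset.sum_le_sum fun m' _ => hB m m'
        _ = ∑ m, S m + ∑ m, ∑ m', (if G.Adj m m' then (S m + S m') / 2 else 0) := by
            have hcollapse : ∀ m : Fin M, ∑ m', ((if m = m' then S m else 0)
                + (if G.Adj m m' then (S m + S m') / 2 else 0))
                = S m + ∑ m', (if G.Adj m m' then (S m + S m') / 2 else 0) := by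
              intro m
              rw [Finset.sum_add_distrib]
              congr 1
              simp
            rw [Finset.sum_congr rfl fun m _ => hcollapse m, Finset.sum_add_distrib]
        _ ≤ ∑ m, S m + Δ * ∑ m, S m := by
            refine add_le_add_right ?_ _
            have hdeg : ∀ f : Fin M → ℝ, ∀ m : Fin M,
                ∑ m', (if G.Adj m m' then f m else 0) = (G.degree m : ℝ) * f m := by
              intro f m
              rw [← Finset.sum_filter, Finset.sum_const, nsmul_eq_mul]
              congr 2
              rw [SimpleGraph.degree, SimpleGraph.neighborFinset_eq_filter]
            have hsplit : ∀ m m' : Fin M, (if G.Adj m m' then (S m + S m') / 2 else 0)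
                = (if G.Adj m m' then S m else 0) / 2
                  + (if G.Adj m m' then S m' else 0) / 2 := by
              intro m m'
              by_cases hadj : G.Adj m m' <;> simp [hadj] <;> ring
            have hE : ∑ m, ∑ m', (if G.Adj m m' then (S m + S m') / 2 else 0)
                = ∑ m, (G.degree m : ℝ) * S m := by
              have h1 : ∀ m, ∑ m', (if G.Adj m m' then (S m + S m') / 2 else 0)
                  = (∑ m', (if G.Adj m m' then S m else 0) / 2)
                    + ∑ m', (if G.Adj m m' then S m' else 0) / 2 := by
                intro m
                rw [← Finset.sum_add_distrib]
                exact Finset.sum_congr rfl fun m' _ => hsplit m m'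
              have hA1 : ∀ m, ∑ m', (if G.Adj m m' then S m else 0) / 2
                  = (G.degree m : ℝ) * S m / 2 := by
                intro m
                rw [← Finset.sum_div, hdeg S m]
              have hA2 : ∑ m, ∑ m', (if G.Adj m m' then S m' else 0) / 2
                  = ∑ m', (G.degree m' : ℝ) * S m' / 2 := by
                rw [Finset.sum_comm]
                refine Finset.sum_congr rfl fun m' _ => ?_
                have hco : ∀ m : Fin M, (if G.Adj m m' then S m' else 0) / 2
                    = (if G.Adj m' m then S m' else 0) / 2 := by
                  intro m; exact congrArg (· / 2) (if_congr (G.adj_comm m m') rfl rfl)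
                rw [Finset.sum_congr rfl fun m _ => hco m, ← Finset.sum_div,
                  hdeg (fun _ => S m') m']
              calc ∑ m, ∑ m', (if G.Adj m m' then (S m + S m') / 2 else 0)
                  = ∑ m, ((∑ m', (if G.Adj m m' then S m else 0) / 2)
                      + ∑ m', (if G.Adj m m' then S m' else 0) / 2) :=
                    Finset.sum_congr rfl fun m _ => h1 m
                _ = ∑ m, (G.degree m : ℝ) * S m / 2
                      + ∑ m', (G.degree m' : ℝ) * S m' / 2 := by
                    rw [Finset.sum_add_distrib]
                    congr 1
                    exact Finset.sum_congr rfl fun m _ => hA1 m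
                _ = ∑ m, (G.degree m : ℝ) * S m := by
                    rw [← Finset.sum_add_distrib]
                    exact Finset.sum_congr rfl fun m _ => by ring
            rw [hE, Finset.mul_sum]
            refine Finset.sum_le_sum fun m _ => ?_
            refine mul_le_mul_of_nonneg_right ?_ (hS0 m)
            rw [hΔdef]
            exact_mod_cast G.degree_le_maxDegree m
        _ = (Δ + 1) * ∑ m, S m := by ring
    -- assemble
    have hxx : (0:ℝ) ≤ x ⬝ᵥ x := by
      rw [dotProduct]; exact Finset.sum_nonneg fun i _ => mul_self_nonneg _
    have hSsum0 : 0 ≤ ∑ m, S m := Finset.sum_nonneg fun m _ => hS0 m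
    have hmain : ∑ m, S m ≤ (Δ + 1) * (x ⬝ᵥ x) := by
      have hkey : (∑ m, S m) * (∑ m, S m) ≤ ((Δ + 1) * (x ⬝ᵥ x)) * ∑ m, S m := by
        have e1 : (∑ m, S m) * (∑ m, S m) = ((Q *ᵥ W) ⬝ᵥ x) ^ 2 := by
          have : (Q *ᵥ W) ⬝ᵥ x = W ⬝ᵥ y := by
            rw [mulVec_dot, hQsymm, hydef]
          rw [this, step2, sq]
        have e2 : ((Q *ᵥ W) ⬝ᵥ x) ^ 2 ≤ ((Q *ᵥ W) ⬝ᵥ (Q *ᵥ W)) * (x ⬝ᵥ x) := by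
          simp only [dotProduct]
          calc (∑ i, (Q *ᵥ W) i * x i) ^ 2
              ≤ (∑ i, ((Q *ᵥ W) i) ^ 2) * (∑ i, (x i) ^ 2) :=
                Finset.sum_mul_sq_le_sq_mul_sq _ _ _
            _ = _ := by simp [sq]
        have e3 : ((Q *ᵥ W) ⬝ᵥ (Q *ᵥ W)) * (x ⬝ᵥ x) ≤ ((Δ + 1) * ∑ m, S m) * (x ⬝ᵥ x) := by
          refine mul_le_mul_of_nonneg_right ?_ hxx
          rw [step4]; exact step8
        calc (∑ m, S m) * (∑ m, S m) = ((Q *ᵥ W) ⬝ᵥ x) ^ 2 := e1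
          _ ≤ ((Q *ᵥ W) ⬝ᵥ (Q *ᵥ W)) * (x ⬝ᵥ x) := e2
          _ ≤ ((Δ + 1) * ∑ m, S m) * (x ⬝ᵥ x) := e3
          _ = ((Δ + 1) * (x ⬝ᵥ x)) * ∑ m, S m := by ring
      rcases hSsum0.eq_or_lt with hzero | hpos
      · rw [← hzero]
        exact mul_nonneg (by linarith) hxx
      · exact le_of_mul_le_mul_right hkey hpos
    exact step1.trans hmain
  -- wrap up : from quadratic form bound to operator norm bound
  rw [matOpNorm]
  refine ContinuousLinearMap.opNorm_le_bound _ (Real.sqrt_nonneg _) fun v => ?_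
  have hv : (LinearMap.toContinuousLinearMap (toEuclideanLin (Dneg Λ part h β hb * Q))) v
      = (WithLp.equiv 2 (Λ → ℝ)).symm
          ((Dneg Λ part h β hb * Q) *ᵥ (WithLp.equiv 2 (Λ → ℝ)) v) := rfl
  rw [hv]
  set x : Λ → ℝ := (WithLp.equiv 2 (Λ → ℝ)) v with hxdef
  rw [EuclideanSpace.norm_eq, EuclideanSpace.norm_eq]
  simp only [WithLp.equiv_symm_apply, PiLp.toLp_apply, Real.norm_eq_abs, sq_abs]
  have hnv : ∀ i, v i ^ 2 = x i * x i := by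
    intro i
    rw [sq, hxdef]
    rfl
  calc Real.sqrt (∑ i, ((Dneg Λ part h β hb * Q) *ᵥ x) i ^ 2)
      ≤ Real.sqrt ((Δ + 1) * (x ⬝ᵥ x)) := by
        apply Real.sqrt_le_sqrt
        have hthis := key x
        rw [dotProduct, dotProduct] at hthis
        rw [dotProduct]
        refine le_trans (le_of_eq ?_) hthis
        exact Finset.sum_congr rfl fun i _ => by ring
    _ = Real.sqrt (Δ + 1) * Real.sqrt (x ⬝ᵥ x) := Real.sqrt_mul (by linarith) _
    _ = Real.sqrt (Δ + 1) * Real.sqrt (∑ i, v i ^ 2) := by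
        congr 1
        rw [dotProduct]
        exact congrArg Real.sqrt (Finset.sum_congr rfl fun i _ => (hnv i).symm)
end

section
/- For any n×n matrix A and any α ∈ (0, 1], the α-th power of the Schatten α-quasi-norm is bounded by the sum of the α-th powers of the absolute values of the matrix entries: ∑_j σ_j(A)^α ≤ ∑_{j,k} |A_{j,k}|^α. -/
open Matrix

/-- The singular values of a real matrix: square roots of the eigenvalues of `AᴴA`
(in no particular order). -/
noncomputable def sVals {m n : Type*} [Fintype m] [Fintype n] [DecidableEq n]
    (A : Matrix m n ℝ) : n → ℝ :=
  fun i => Real.sqrt ((Matrix.isHermitian_conjTranspose_mul_self A).eigenvalues i)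

/-- `‖A‖_α^α`: the sum of the `α`-th powers of the singular values. -/
noncomputable def schattenQPow {m n : Type*} [Fintype m] [Fintype n] [DecidableEq n]
    (α : ℝ) (A : Matrix m n ℝ) : ℝ :=
  ∑ i, sVals A i ^ α

/-- Subadditivity of `x ↦ x ^ p` for `0 < p ≤ 1` over finite sums. -/
lemma sum_rpow_le {ι : Type*} (s : Finset ι) (f : ι → ℝ) (hf : ∀ i ∈ s, 0 ≤ f i)
    {p : ℝ} (hp0 : 0 < p) (hp1 : p ≤ 1) :
    (∑ i ∈ s, f i) ^ p ≤ ∑ i ∈ s, f i ^ p := by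
  classical
  induction s using Finset.cons_induction with
  | empty => simp [Real.zero_rpow hp0.ne']
  | cons a s ha ih =>
    rw [Finset.sum_cons, Finset.sum_cons]
    have hfa : 0 ≤ f a := hf a (Finset.mem_cons_self a s)
    have hfs : ∀ i ∈ s, 0 ≤ f i := fun i hi => hf i (Finset.mem_cons.2 (Or.inr hi))
    have hsum : 0 ≤ ∑ i ∈ s, f i := Finset.sum_nonneg hfs
    have key : (f a + ∑ i ∈ s, f i) ^ p ≤ f a ^ p + (∑ i ∈ s, f i) ^ p := by
      have := NNReal.rpow_add_le_add_rpow ⟨f a, hfa⟩ ⟨∑ i ∈ s, f i, hsum⟩ hp0.le hp1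
      have h2 := (NNReal.coe_le_coe).2 this
      simp only [NNReal.coe_add, NNReal.coe_rpow, NNReal.coe_mk] at h2
      convert h2 using 2
      all_goals rfl
    exact key.trans (by linarith [ih hfs])

/-- `∑_j σ_j(A)^α ≤ ∑_{j,k} |A_{j,k}|^α` for `0 < α ≤ 1`. -/
theorem schattenQPow_le_sum_entries {n : Type*} [Fintype n] [DecidableEq n]
    (A : Matrix n n ℝ) (α : ℝ) (hα0 : 0 < α) (hα1 : α ≤ 1) :
    schattenQPow α A ≤ ∑ j, ∑ k, |A j k| ^ α := by
  classical
  set hB := Matrix.isHermitian_conjTranspose_mul_self A with hBdef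
  set B : Matrix n n ℝ := Aᴴ * A with hBmat
  set lam : n → ℝ := hB.eigenvalues with hlam
  have hlam_nonneg : ∀ i, 0 ≤ lam i := fun i =>
    (Matrix.posSemidef_conjTranspose_mul_self A).eigenvalues_nonneg i
  set U : Matrix n n ℝ := (hB.eigenvectorUnitary : Matrix n n ℝ) with hU
  -- rows and columns of U are unit vectors
  have hUU : U * Uᴴ = 1 := Matrix.mem_unitaryGroup_iff.mp hB.eigenvectorUnitary.2
  have hUU' : Uᴴ * U = 1 := Matrix.mem_unitaryGroup_iff'.mp hB.eigenvectorUnitary.2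
  have hrow : ∀ j, ∑ k, (U j k) ^ 2 = 1 := by
    intro j
    have := congrFun (congrFun hUU j) j
    simpa [Matrix.mul_apply, Matrix.one_apply, sq] using this
  have hcol : ∀ k, ∑ j, (U j k) ^ 2 = 1 := by
    intro k
    have := congrFun (congrFun hUU' k) k
    simpa [Matrix.mul_apply, Matrix.one_apply, sq, mul_comm] using this
  -- diagonal entries of B as convex combinations of eigenvalues
  have hdiag : ∀ j, B j j = ∑ k, (U j k) ^ 2 * lam k := by
    intro j
    conv_lhs => rw [hB.spectral_theorem]
    simp [Matrix.mul_apply, Matrix.diagonal_apply, Finset.sum_mul]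
    refine Finset.sum_congr rfl fun k _ => ?_
    simp [hU, Matrix.IsHermitian.eigenvectorUnitary_apply, Matrix.conjTranspose_apply, sq]
    ring
  -- the concave function t ↦ t ^ (α/2)
  have hccv : ConcaveOn ℝ (Set.Ici 0) fun x : ℝ => x ^ (α / 2) :=
    Real.concaveOn_rpow (by linarith) (by linarith)
  -- Jensen's inequality for each row
  have jensen : ∀ j, ∑ k, (U j k) ^ 2 * lam k ^ (α / 2) ≤ (B j j) ^ (α / 2) := by
    intro j
    have := hccv.le_map_sum (t := Finset.univ) (w := fun k => (U j k) ^ 2)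
      (p := lam) (fun k _ => sq_nonneg _) (hrow j)
      (fun k _ => hlam_nonneg k)
    rw [hdiag j]
    simpa [smul_eq_mul] using this
  -- sum over j
  have step1 : ∑ k, lam k ^ (α / 2) ≤ ∑ j, (B j j) ^ (α / 2) := by
    calc ∑ k, lam k ^ (α / 2) = ∑ k, (∑ j, (U j k) ^ 2) * lam k ^ (α / 2) := by
          simp [hcol]
      _ = ∑ j, ∑ k, (U j k) ^ 2 * lam k ^ (α / 2) := by
          rw [Finset.sum_comm]
          simp [Finset.sum_mul]
      _ ≤ ∑ j, (B j j) ^ (α / 2) := Finset.sum_le_sum fun j _ => jensen j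
  -- rewrite LHS
  have lhs_eq : schattenQPow α A = ∑ k, lam k ^ (α / 2) := by
    unfold schattenQPow sVals
    refine Finset.sum_congr rfl fun k _ => ?_
    rw [Real.sqrt_eq_rpow]
    show (lam k ^ ((1:ℝ)/2)) ^ α = lam k ^ (α / 2)
    rw [← Real.rpow_mul (hlam_nonneg k), show (1:ℝ)/2 * α = α / 2 by ring]
  -- bound the diagonal entries
  have step2 : ∀ j, (B j j) ^ (α / 2) ≤ ∑ k, |A k j| ^ α := by
    intro j
    have hBjj : B j j = ∑ k, (A k j) ^ 2 := by
      simp [hBmat, Matrix.mul_apply, Matrix.conjTranspose_apply, sq]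
    rw [hBjj]
    have h1 : (∑ k, (A k j) ^ 2) ^ (α / 2) ≤ ∑ k, ((A k j) ^ 2) ^ (α / 2) :=
      sum_rpow_le Finset.univ _ (fun k _ => sq_nonneg _) (by linarith) (by linarith)
    refine h1.trans (le_of_eq (Finset.sum_congr rfl fun k _ => ?_))
    rw [← sq_abs, ← Real.rpow_natCast |A k j| 2, ← Real.rpow_mul (abs_nonneg _),
      show ((2:ℕ):ℝ) * (α / 2) = α by push_cast; ring]
  calc schattenQPow α A = ∑ k, lam k ^ (α / 2) := lhs_eq
    _ ≤ ∑ j, (B j j) ^ (α / 2) := step1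
    _ ≤ ∑ j, ∑ k, |A k j| ^ α := Finset.sum_le_sum fun j _ => step2 j
    _ = ∑ j, ∑ k, |A j k| ^ α := Finset.sum_comm
end

section
/- Let Λ be a finite subset of ℤ^d, Λ₀ ⊆ Λ, and η > 0. Then ∑_{x ∈ Λ₀} ∑_{y ∈ Λ∖Λ₀} e^{−η|x−y|₁} ≤ (∑_{z ∈ ℤ^d} e^{−η|z|₁})² · |∂Λ₀|, where ∂Λ₀ = {x ∈ Λ₀ : ∃ y ∈ Λ∖Λ₀ with |x−y|₁ = 1} is the boundary of Λ₀ in Λ. -/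
lemma summable_exp_int (η : ℝ) (hη : 0 < η) :
    Summable fun n : ℤ => Real.exp (-η * |(n : ℝ)|) := by
  have key : ∀ n : ℤ, Real.exp (-η * |(n : ℝ)|) = Real.exp (-η) ^ n.natAbs := by
    intro n
    rw [← Real.exp_nat_mul]
    congr 1
    have : |(n : ℝ)| = (n.natAbs : ℝ) := by
      rw [Nat.cast_natAbs, Int.cast_abs]
    rw [this]; ring
  simp_rw [key]
  rw [summable_int_iff_summable_nat_and_neg]
  have hlt : Real.exp (-η) < 1 := Real.exp_lt_one_iff.mpr (by linarith)
  constructor <;>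
  · simpa using summable_geometric_of_lt_one (Real.exp_nonneg _) hlt

lemma summable_exp_pi (d : ℕ) (η : ℝ) (hη : 0 < η) :
    Summable fun z : Fin d → ℤ => Real.exp (-η * (dist1 z 0 : ℝ)) := by
  induction d with
  | zero =>
    have : (dist1 (d := 0)) = fun _ _ => 0 := by
      funext x y; simp [dist1]
    exact Summable.of_finite
  | succ n ih =>
    have h := (Summable.mul_of_nonneg (summable_exp_int η hη) ih
      (fun n => Real.exp_nonneg _) (fun z => Real.exp_nonneg _))
    rw [← (Fin.consEquiv (fun _ : Fin (n+1) => ℤ)).summable_iff]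
    convert h using 2 with p
    simp only [Function.comp_apply, Fin.consEquiv, Equiv.coe_fn_mk]
    rw [← Real.exp_add]
    congr 1
    have : (dist1 (Fin.cons p.1 p.2) 0 : ℝ) = |(p.1 : ℝ)| + (dist1 p.2 0 : ℝ) := by
      simp only [dist1, Pi.zero_apply, sub_zero]
      push_cast
      rw [Fin.sum_univ_succ]
      simp [Int.cast_abs]
    rw [this]; ring

lemma dist1_comm {d : ℕ} (x y : Fin d → ℤ) : dist1 x y = dist1 y x := by
  unfold dist1; exact Finset.sum_congr rfl fun i _ => abs_sub_comm _ _

lemma sum_exp_le {d : ℕ} (A : Finset (Fin d → ℤ)) (z : Fin d → ℤ) (η : ℝ) (hη : 0 < η) :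
    ∑ x ∈ A, Real.exp (-η * (dist1 x z : ℝ)) ≤
      ∑' w : Fin d → ℤ, Real.exp (-η * (dist1 w 0 : ℝ)) := by
  have hinj : ∀ a ∈ A, ∀ b ∈ A, a - z = b - z → a = b := fun a _ b _ h => by
    simpa using congrArg (· + z) h
  have key : ∑ x ∈ A, Real.exp (-η * (dist1 x z : ℝ))
      = ∑ w ∈ A.image (· - z), Real.exp (-η * (dist1 w 0 : ℝ)) := by
    rw [Finset.sum_image hinj]
    refine Finset.sum_congr rfl fun x _ => ?_
    have : dist1 x z = dist1 (x - z) 0 := Finset.sum_congr rfl fun i _ => by simp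
    rw [this]
  rw [key]
  exact Summable.sum_le_tsum _ (fun _ _ => Real.exp_nonneg _) (summable_exp_pi d η hη)


/-- the double sum of `e^{-η|x-y|₁}` over `x ∈ Λ₀`, `y ∈ Λ∖Λ₀` is
bounded by `(∑_{z∈ℤ^d} e^{-η|z|₁})² · |∂Λ₀|`, given the geodesic-crossing
property of the boundary. -/
theorem exp_decay_boundary_area_bound {d : ℕ} (Λ Λ₀ : Finset (Fin d → ℤ))
    (hsub : Λ₀ ⊆ Λ) (η : ℝ) (hη : 0 < η)
    (hgeo : ∀ x ∈ Λ₀, ∀ y ∈ Λ \ Λ₀, ∃ z ∈ Λ₀,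
      (∃ w ∈ Λ \ Λ₀, dist1 z w = 1) ∧ dist1 x y = dist1 x z + dist1 z y) :
    ∑ x ∈ Λ₀, ∑ y ∈ Λ \ Λ₀, Real.exp (-η * (dist1 x y : ℝ)) ≤
      (∑' z : Fin d → ℤ, Real.exp (-η * (dist1 z 0 : ℝ))) ^ 2 *
        ((Λ₀.filter fun x => ∃ y ∈ Λ \ Λ₀, dist1 x y = 1).card : ℝ) := by
  have hSnn : 0 ≤ ∑' z : Fin d → ℤ, Real.exp (-η * (dist1 z 0 : ℝ)) :=
    tsum_nonneg fun _ => Real.exp_nonneg _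
  set S := ∑' z : Fin d → ℤ, Real.exp (-η * (dist1 z 0 : ℝ)) with hS
  set B := Λ₀.filter fun x => ∃ y ∈ Λ \ Λ₀, dist1 x y = 1 with hB
  calc ∑ x ∈ Λ₀, ∑ y ∈ Λ \ Λ₀, Real.exp (-η * (dist1 x y : ℝ))
      ≤ ∑ x ∈ Λ₀, ∑ y ∈ Λ \ Λ₀, ∑ z ∈ B,
          Real.exp (-η * (dist1 x z : ℝ)) * Real.exp (-η * (dist1 z y : ℝ)) := by
        refine Finset.sum_le_sum fun x hx => Finset.sum_le_sum fun y hy => ?_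
        obtain ⟨z, hz, hzb, heq⟩ := hgeo x hx y hy
        have hzB : z ∈ B := Finset.mem_filter.mpr ⟨hz, hzb⟩
        have h1 : Real.exp (-η * (dist1 x y : ℝ))
            = Real.exp (-η * (dist1 x z : ℝ)) * Real.exp (-η * (dist1 z y : ℝ)) := by
          rw [← Real.exp_add]
          congr 1
          have h2 : ((dist1 x y : ℤ) : ℝ) = (dist1 x z : ℝ) + (dist1 z y : ℝ) := by
            rw [heq]; push_cast; ring
          rw [h2]; ring
        rw [h1]
        exact Finset.single_le_sum
          (f := fun z => Real.exp (-η * (dist1 x z : ℝ)) * Real.exp (-η * (dist1 z y : ℝ)))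
          (fun z _ => by positivity) hzB
    _ = ∑ z ∈ B, (∑ x ∈ Λ₀, Real.exp (-η * (dist1 x z : ℝ))) *
          (∑ y ∈ Λ \ Λ₀, Real.exp (-η * (dist1 z y : ℝ))) := by
        rw [show (∑ x ∈ Λ₀, ∑ y ∈ Λ \ Λ₀, ∑ z ∈ B,
            Real.exp (-η * (dist1 x z : ℝ)) * Real.exp (-η * (dist1 z y : ℝ)))
          = ∑ x ∈ Λ₀, ∑ z ∈ B, ∑ y ∈ Λ \ Λ₀,
            Real.exp (-η * (dist1 x z : ℝ)) * Real.exp (-η * (dist1 z y : ℝ))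
          from Finset.sum_congr rfl fun x _ => Finset.sum_comm, Finset.sum_comm]
        exact Finset.sum_congr rfl fun z _ => (Finset.sum_mul_sum _ _ _ _).symm
    _ ≤ ∑ _z ∈ B, S * S := by
        refine Finset.sum_le_sum fun z hz => ?_
        have h1 := sum_exp_le Λ₀ z η hη
        have h2 : ∑ y ∈ Λ \ Λ₀, Real.exp (-η * (dist1 z y : ℝ)) ≤ S := by
          have e : ∑ y ∈ Λ \ Λ₀, Real.exp (-η * (dist1 z y : ℝ))
              = ∑ y ∈ Λ \ Λ₀, Real.exp (-η * (dist1 y z : ℝ)) :=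
            Finset.sum_congr rfl fun y _ => by rw [dist1_comm]
          rw [e]
          exact sum_exp_le (Λ \ Λ₀) z η hη
        exact mul_le_mul h1 h2 (Finset.sum_nonneg fun _ _ => Real.exp_nonneg _) hSnn
    _ = S ^ 2 * (B.card : ℝ) := by
        rw [Finset.sum_const, nsmul_eq_mul]; ring
end
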